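/- Let x ∈ ℝⁿ with g(x) < ∞, let α > 0, let H be a symmetric n×n matrix with ⟨d, Hd⟩ ≥ α‖d‖² for all d, and define q(y) = f(x) + ⟨∇f(x), y − x⟩ + ½⟨y − x, H(y − x)⟩ + g(y). Let x̂ ∈ ℝⁿ satisfy q(x̂) ≤ q(x) and set d = x̂ − x. Then for every θ ∈ (0,1) and every τ with 0 < τ ≤ min{1, (1−θ)α/L₁}, one has F(x + τd) ≤ F(x) − (θατ/2)‖d‖². -/

import Mathlib

open scoped RealInnerProductSpace
open Metric Set Filter

noncomputable section

abbrev En (n : ℕ) : Type := EuclideanSpace ℝ (Fin n)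

/-- Convex subdifferential of an extended-real-valued function `g` at `x`. -/
def ESubdiff {n : ℕ} (g : En n → EReal) (x : En n) : Set (En n) :=
  {v | ∀ y, g x + ((⟪v, y - x⟫ : ℝ) : EReal) ≤ g y}

/-- `g` is proper: it never takes the value `-∞` and is finite somewhere. -/
def ProperFun {n : ℕ} (g : En n → EReal) : Prop :=
  (∀ x, g x ≠ ⊥) ∧ ∃ x, g x ≠ ⊤

/-- Convexity for extended-real-valued functions. -/
def EConvexOn {n : ℕ} (g : En n → EReal) : Prop :=
  ∀ x y : En n, ∀ a b : ℝ, 0 ≤ a → 0 ≤ b → a + b = 1 →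
    g (a • x + b • y) ≤ (a : EReal) * g x + (b : EReal) * g y

/-- `p` minimizes `y ↦ g y + ‖y - u‖ ^ 2 / 2`. -/
def IsProxPt {n : ℕ} (g : En n → EReal) (u p : En n) : Prop :=
  ∀ y, g p + ((‖p - u‖ ^ 2 / 2 : ℝ) : EReal) ≤ g y + ((‖y - u‖ ^ 2 / 2 : ℝ) : EReal)

/-- `prox` maps each `u` to the unique minimizer of `y ↦ g y + ‖y - u‖ ^ 2 / 2`. -/
def IsProxMap {n : ℕ} (g : En n → EReal) (prox : En n → En n) : Prop :=
  ∀ u, IsProxPt g u (prox u) ∧ ∀ p, IsProxPt g u p → p = prox u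

/-- The solution set `𝒳* = argmin (f + g)`. -/
def ArgminSet {n : ℕ} (f : En n → ℝ) (g : En n → EReal) : Set (En n) :=
  {x | ∀ y, (f x : EReal) + g x ≤ (f y : EReal) + g y}

/-- The prox-gradient mapping `𝒢 x = x - Prox_g (x - ∇f x)`. -/
def Gmap {n : ℕ} (f' prox : En n → En n) (x : En n) : En n :=
  x - prox (x - f' x)

/-- If `xhat` satisfies `q(xhat) ≤ q(x)` for the quadratic model `q` built
with a symmetric `H` satisfying `⟨d, Hd⟩ ≥ α‖d‖²`, then for every `θ ∈ (0,1)` and every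
`τ ∈ (0, min{1, (1-θ)α/L₁}]` one has `F(x + τ d) ≤ F(x) - (θατ/2)‖d‖²`, where `d = xhat - x`. -/
theorem descent_aux {n : ℕ} (f : En n → ℝ) (f' : En n → En n) (L₁ : ℝ)
    (hgrad : ∀ x, HasGradientAt f (f' x) x) (hgradcont : Continuous f')
    (hlip : ∀ x y : En n, ‖f' x - f' y‖ ≤ L₁ * ‖x - y‖) (x v : En n) :
    f (x + v) ≤ f x + ⟪f' x, v⟫ + L₁ / 2 * ‖v‖ ^ 2 := by
  have hderiv : ∀ t : ℝ, HasDerivAt (fun t : ℝ => f (x + t • v)) ⟪f' (x + t • v), v⟫ t := by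
    intro t
    have h1 : HasDerivAt (fun t : ℝ => x + t • v) v t := by
      simpa using ((hasDerivAt_id t).smul_const v).const_add x
    have h2 := (hgrad (x + t • v)).hasFDerivAt.comp_hasDerivAt t h1
    simp at h2
    exact h2
  have hcont : Continuous fun t : ℝ => ⟪f' (x + t • v), v⟫ := by
    exact Continuous.inner (hgradcont.comp (by fun_prop)) continuous_const
  have key : f (x + v) - f x = ∫ t in (0:ℝ)..1, ⟪f' (x + t • v), v⟫ := by
    have := intervalIntegral.integral_eq_sub_of_hasDerivAt
      (f := fun t : ℝ => f (x + t • v)) (fun t _ => hderiv t)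
      (hcont.intervalIntegrable 0 1)
    simpa using this.symm
  have hbound : (∫ t in (0:ℝ)..1, ⟪f' (x + t • v), v⟫) ≤
      ∫ t in (0:ℝ)..1, (⟪f' x, v⟫ + L₁ * t * ‖v‖ ^ 2) := by
    apply intervalIntegral.integral_mono_on (by norm_num)
      (hcont.intervalIntegrable 0 1)
      ((by fun_prop : Continuous fun t : ℝ => ⟪f' x, v⟫ + L₁ * t * ‖v‖ ^ 2).intervalIntegrable 0 1)
    intro t ht
    rcases ht with ⟨ht0, ht1⟩
    have h1 : ⟪f' (x + t • v), v⟫ - ⟪f' x, v⟫ = ⟪f' (x + t • v) - f' x, v⟫ := by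
      rw [inner_sub_left]
    have h2 : ⟪f' (x + t • v) - f' x, v⟫ ≤ ‖f' (x + t • v) - f' x‖ * ‖v‖ :=
      real_inner_le_norm _ _
    have h3 : ‖f' (x + t • v) - f' x‖ ≤ L₁ * (t * ‖v‖) := by
      have := hlip (x + t • v) x
      simpa [norm_smul, abs_of_nonneg ht0] using this
    have h4 : ‖f' (x + t • v) - f' x‖ * ‖v‖ ≤ L₁ * (t * ‖v‖) * ‖v‖ :=
      mul_le_mul_of_nonneg_right h3 (norm_nonneg _)
    nlinarith [norm_nonneg v]
  have hInt : (∫ t in (0:ℝ)..1, (⟪f' x, v⟫ + L₁ * t * ‖v‖ ^ 2)) =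
      ⟪f' x, v⟫ + L₁ / 2 * ‖v‖ ^ 2 := by
    rw [intervalIntegral.integral_add (intervalIntegrable_const)
      ((by fun_prop : Continuous fun t : ℝ => L₁ * t * ‖v‖ ^ 2).intervalIntegrable 0 1)]
    simp only [intervalIntegral.integral_const, smul_eq_mul]
    have : (∫ t in (0:ℝ)..1, L₁ * t * ‖v‖ ^ 2) = L₁ / 2 * ‖v‖ ^ 2 := by
      have : (fun t : ℝ => L₁ * t * ‖v‖ ^ 2) = fun t : ℝ => (L₁ * ‖v‖ ^ 2) * t := by
        ext t; ring
      rw [this, intervalIntegral.integral_const_mul, integral_id]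
      ring
    rw [this]; ring
  linarith [key ▸ (hbound.trans_eq hInt)]


theorem line_search_decrease {n : ℕ}
    (f : En n → ℝ) (f' : En n → En n) (g : En n → EReal)
    (L₁ : ℝ) (hL₁ : 0 < L₁)
    (hfconv : ConvexOn ℝ Set.univ f)
    (hgrad : ∀ x, HasGradientAt f (f' x) x)
    (hgradcont : Continuous f')
    (hlip : ∀ x y : En n, ‖f' x - f' y‖ ≤ L₁ * ‖x - y‖)
    (hgproper : ProperFun g) (hglsc : LowerSemicontinuous g) (hgconv : EConvexOn g)
    (x : En n) (hgx : g x ≠ ⊤)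
    (α : ℝ) (hα : 0 < α)
    (H : En n →L[ℝ] En n)
    (hHsymm : ∀ u v : En n, ⟪H u, v⟫ = ⟪u, H v⟫)
    (hHpd : ∀ d : En n, α * ‖d‖ ^ 2 ≤ ⟪d, H d⟫)
    (xhat : En n)
    (hq : ((f x + ⟪f' x, xhat - x⟫ + ⟪xhat - x, H (xhat - x)⟫ / 2 : ℝ) : EReal) + g xhat ≤
      (f x : EReal) + g x)
    (θ : ℝ) (hθ0 : 0 < θ) (hθ1 : θ < 1)
    (τ : ℝ) (hτ0 : 0 < τ) (hτ : τ ≤ min 1 ((1 - θ) * α / L₁)) :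
    (f (x + τ • (xhat - x)) : EReal) + g (x + τ • (xhat - x)) ≤
      ((f x : EReal) + g x) - ((θ * α * τ / 2 * ‖xhat - x‖ ^ 2 : ℝ) : EReal) := by
  have hgproper : (∀ x, g x ≠ ⊥) ∧ ∃ x, g x ≠ ⊤ := hgproper
  have hgconv : ∀ x y : En n, ∀ a b : ℝ, 0 ≤ a → 0 ≤ b → a + b = 1 →
      g (a • x + b • y) ≤ (a : EReal) * g x + (b : EReal) * g y := hgconv

  set d := xhat - x with hd
  set y := x + τ • d with hy
  have hτ1 : τ ≤ 1 := hτ.trans (min_le_left _ _)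
  have hτL : τ * L₁ ≤ (1 - θ) * α := by
    have h := hτ.trans (min_le_right _ _)
    rw [le_div_iff₀ hL₁] at h
    exact h
  -- g x finite
  have hgxbot := hgproper.1 x
  set gx : ℝ := (g x).toReal with hgxdef
  have hgxeq : ((gx : ℝ) : EReal) = g x := EReal.coe_toReal hgx hgxbot
  -- g xhat finite
  have hgxhat : g xhat ≠ ⊤ := by
    intro h
    rw [h, EReal.coe_add_top] at hq
    exact absurd (top_le_iff.mp hq) (by
      rw [← hgxeq, ← EReal.coe_add]; exact EReal.coe_ne_top _)
  set gh : ℝ := (g xhat).toReal with hghdef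
  have hgheq : ((gh : ℝ) : EReal) = g xhat := EReal.coe_toReal hgxhat (hgproper.1 xhat)
  -- real form of hq
  have hqr : f x + ⟪f' x, d⟫ + ⟪d, H d⟫ / 2 + gh ≤ f x + gx := by
    rw [← hgxeq, ← hgheq, ← EReal.coe_add, ← EReal.coe_add, EReal.coe_le_coe_iff] at hq
    linarith [hq]
  -- convexity of g
  have hconv := hgconv x xhat (1 - τ) τ (by linarith) (le_of_lt hτ0) (by ring)
  have hpt : (1 - τ) • x + τ • xhat = y := by
    rw [hy, hd]; module
  rw [hpt, ← hgxeq, ← hgheq] at hconv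
  have hconv' : g y ≤ (((1 - τ) * gx + τ * gh : ℝ) : EReal) := by
    rw [EReal.coe_add, EReal.coe_mul, EReal.coe_mul] at *
    exact hconv
  -- g y finite
  have hgybot := hgproper.1 y
  have hgytop : g y ≠ ⊤ := fun h => by
    rw [h] at hconv'; exact absurd (top_le_iff.mp hconv') (EReal.coe_ne_top _)
  set gy : ℝ := (g y).toReal with hgydef
  have hgyeq : ((gy : ℝ) : EReal) = g y := EReal.coe_toReal hgytop hgybot
  have hgyr : gy ≤ (1 - τ) * gx + τ * gh := by
    rw [← hgyeq, EReal.coe_le_coe_iff] at hconv'; exact hconv'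
  -- descent
  have hdesc : f y ≤ f x + τ * ⟪f' x, d⟫ + L₁ / 2 * (τ ^ 2 * ‖d‖ ^ 2) := by
    have := descent_aux f f' L₁ hgrad hgradcont hlip x (τ • d)
    rw [real_inner_smul_right] at this
    have hn : ‖τ • d‖ ^ 2 = τ ^ 2 * ‖d‖ ^ 2 := by
      rw [norm_smul, mul_pow, Real.norm_eq_abs, sq_abs]
    rw [hn] at this
    simpa [hy] using this
  have hpd := hHpd d
  -- final real inequality
  have hfinal : f y + gy ≤ f x + gx - θ * α * τ / 2 * ‖d‖ ^ 2 := by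
    have hnn : (0:ℝ) ≤ ‖d‖ ^ 2 := sq_nonneg _
    have h1 := mul_le_mul_of_nonneg_left hqr hτ0.le
    have h2 := mul_le_mul_of_nonneg_left hpd hτ0.le
    have h3 := mul_le_mul_of_nonneg_left (mul_le_mul_of_nonneg_right hτL hnn) hτ0.le
    nlinarith [h1, h2, h3]
  -- lift
  rw [← hgyeq, ← hgxeq, ← EReal.coe_add, ← EReal.coe_add, ← EReal.coe_sub,
    EReal.coe_le_coe_iff]
  exact hfinal
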